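/- Let k ≥ 1 and M ≥ 1 be integers with M odd. Twice the cardinality of the set {(m, μ, ρ) : 0 ≤ m < kM+2, 0 ≤ μ ≤ ρ ≤ k−1, μ + ρ ≡ m (mod k)} equals (k+1)(kM+2). (This is the topological order N_k = (k+1)(kM+2)/2 of the ℤ_k-parafermion Hall state.) -/

import Mathlib

open Finset

private lemma pf_mod_of_lt_two_mul {k a : ℕ} (h : a < 2 * k) :
    a % k = if a < k then a else a - k := by
  split_ifs with h'
  · exact Nat.mod_eq_of_lt h'
  · rw [Nat.mod_eq_sub_mod (le_of_not_gt h'), Nat.mod_eq_of_lt (by omega)]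

/-- The number of ordered pairs `(μ, ρ)` in `[0,k)²` with `(μ+ρ) % k = r` is `k`. -/
private lemma pf_cardA (k r : ℕ) (hr : r < k) :
    ((range k ×ˢ range k).filter (fun p => (p.1 + p.2) % k = r)).card = k := by
  refine Eq.trans ?_ (card_range k)
  symm
  apply card_nbij' (i := fun μ => (μ, if μ ≤ r then r - μ else r + k - μ))
      (j := fun p => p.1)
  · intro μ hμ
    simp only [mem_coe, mem_range] at hμ
    simp only [mem_coe, mem_filter, mem_product, mem_range]
    have hs : μ + (if μ ≤ r then r - μ else r + k - μ)
        = if μ ≤ r then r else r + k := by split_ifs <;> omega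
    refine ⟨⟨hμ, ?_⟩, ?_⟩
    · split_ifs <;> omega
    · rw [hs]
      split_ifs with h
      · exact Nat.mod_eq_of_lt hr
      · rw [Nat.add_mod_right, Nat.mod_eq_of_lt hr]
  · intro p hp
    simp only [mem_coe, mem_filter, mem_product, mem_range] at hp
    simp only [mem_coe, mem_range]
    exact hp.1.1
  · intro μ hμ
    rfl
  · rintro ⟨a, b⟩ hp
    simp only [mem_coe, mem_filter, mem_product, mem_range] at hp
    obtain ⟨⟨ha, hb⟩, hmod⟩ := hp
    rw [pf_mod_of_lt_two_mul (by omega)] at hmod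
    simp only [Prod.mk.injEq, true_and]
    split_ifs at hmod ⊢ <;> omega

/-- Key: twice the number of unordered pairs with sum `≡ r` equals `k` plus the
number of diagonal elements. -/
private lemma pf_key (k r : ℕ) (hk : 0 < k) (hr : r < k) :
    2 * ((range k ×ˢ range k).filter (fun p => p.1 ≤ p.2 ∧ (p.1 + p.2) % k = r)).card
      = k + ((range k).filter (fun μ => (2 * μ) % k = r)).card := by
  set U := (range k ×ˢ range k).filter (fun p => p.1 ≤ p.2 ∧ (p.1 + p.2) % k = r) with hU
  set V := (range k ×ˢ range k).filter (fun p => p.2 ≤ p.1 ∧ (p.1 + p.2) % k = r) with hV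
  have hVU : V.card = U.card := by
    apply card_nbij' (i := Prod.swap) (j := Prod.swap)
    · rintro ⟨a, b⟩ hp
      simp only [mem_coe, hU, hV, mem_filter, mem_product, mem_range, Prod.swap] at hp ⊢
      refine ⟨⟨hp.1.2, hp.1.1⟩, hp.2.1, ?_⟩
      rw [Nat.add_comm]; exact hp.2.2
    · rintro ⟨a, b⟩ hp
      simp only [mem_coe, hU, hV, mem_filter, mem_product, mem_range, Prod.swap] at hp ⊢
      refine ⟨⟨hp.1.2, hp.1.1⟩, hp.2.1, ?_⟩
      rw [Nat.add_comm]; exact hp.2.2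
    · rintro ⟨a, b⟩ _; rfl
    · rintro ⟨a, b⟩ _; rfl
  have hunion : U ∪ V = (range k ×ˢ range k).filter (fun p => (p.1 + p.2) % k = r) := by
    ext ⟨a, b⟩
    simp only [hU, hV, mem_union, mem_filter, mem_product, mem_range]
    constructor
    · rintro (⟨h1, h2, h3⟩ | ⟨h1, h2, h3⟩) <;> exact ⟨h1, h3⟩
    · rintro ⟨h1, h3⟩
      rcases Nat.le_total a b with h | h
      · exact Or.inl ⟨h1, h, h3⟩
      · exact Or.inr ⟨h1, h, h3⟩
  have hinter : (U ∩ V).card = ((range k).filter (fun μ => (2 * μ) % k = r)).card := by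
    apply card_nbij' (i := fun p => p.1) (j := fun μ => (μ, μ))
    · rintro ⟨a, b⟩ hp
      simp only [mem_coe, hU, hV, mem_inter, mem_filter, mem_product, mem_range] at hp
      simp only [mem_coe, mem_filter, mem_range]
      have hab : a = b := le_antisymm hp.1.2.1 hp.2.2.1
      refine ⟨hp.1.1.1, ?_⟩
      have := hp.1.2.2
      rw [← hab] at this
      rw [show 2 * a = a + a by ring]
      exact this
    · intro μ hμ
      simp only [mem_coe, mem_filter, mem_range] at hμ
      simp only [mem_coe, hU, hV, mem_inter, mem_filter, mem_product, mem_range]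
      have : (μ + μ) % k = r := by rw [show μ + μ = 2 * μ by ring]; exact hμ.2
      exact ⟨⟨⟨hμ.1, hμ.1⟩, le_refl _, this⟩, ⟨hμ.1, hμ.1⟩, le_refl _, this⟩
    · rintro ⟨a, b⟩ hp
      simp only [mem_coe, hU, hV, mem_inter, mem_filter, mem_product, mem_range] at hp
      have hab : a = b := le_antisymm hp.1.2.1 hp.2.2.1
      simp [hab]
    · intro μ hμ; rfl
  have hcu := card_union_add_card_inter U V
  rw [hunion, pf_cardA k r hr] at hcu
  omega

/-- Count of `m < k*q` with `m % k = r`, for `r < k`. -/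
private lemma pf_count_block (k r q : ℕ) (hr : r < k) :
    ((range (k * q)).filter (fun m => m % k = r)).card = q := by
  induction q with
  | zero => simp
  | succ q ih =>
    have hsplit : range (k * (q + 1)) = range (k * q) ∪ Ico (k * q) (k * q + k) := by
      simp only [range_eq_Ico]
      rw [Finset.Ico_union_Ico_eq_Ico (Nat.zero_le _) (by omega), Nat.mul_succ]
    have hIco : (Ico (k * q) (k * q + k)).filter (fun m => m % k = r) = {k * q + r} := by
      ext m
      simp only [mem_filter, mem_Ico, mem_singleton]
      constructor
      · rintro ⟨⟨h1, h2⟩, h3⟩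
        obtain ⟨s, rfl⟩ : ∃ s, m = k * q + s := ⟨m - k * q, by omega⟩
        rw [Nat.mul_add_mod, Nat.mod_eq_of_lt (by omega)] at h3
        omega
      · rintro rfl
        exact ⟨⟨by omega, by omega⟩, by rw [Nat.mul_add_mod, Nat.mod_eq_of_lt hr]⟩
    have hdisj : Disjoint ((range (k * q)).filter (fun m => m % k = r))
        ((Ico (k * q) (k * q + k)).filter (fun m => m % k = r)) := by
      rw [Finset.disjoint_left]
      intro m hm hm'
      simp only [mem_filter, mem_range, mem_Ico] at hm hm'
      omega
    rw [hsplit, filter_union, card_union_of_disjoint hdisj, ih, hIco, card_singleton]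

/-- Count of `m < k*M+2` with `m % k = r`, for `2 ≤ k`, `r < k`. -/
private lemma pf_count_mod (k r M : ℕ) (hk : 2 ≤ k) (hr : r < k) :
    ((range (k * M + 2)).filter (fun m => m % k = r)).card
      = M + if r < 2 then 1 else 0 := by
  have hsplit : range (k * M + 2) = range (k * M) ∪ Ico (k * M) (k * M + 2) := by
    simp only [range_eq_Ico]
    rw [Finset.Ico_union_Ico_eq_Ico (Nat.zero_le _) (by omega)]
  have h1 : (k * M) % k = 0 := Nat.mul_mod_right k M
  have h2 : (k * M + 1) % k = 1 := by
    rw [Nat.mul_add_mod, Nat.mod_eq_of_lt (by omega)]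
  have hIco : ((Ico (k * M) (k * M + 2)).filter (fun m => m % k = r)).card
      = if r < 2 then 1 else 0 := by
    by_cases hr2 : r < 2
    · have : (Ico (k * M) (k * M + 2)).filter (fun m => m % k = r) = {k * M + r} := by
        ext m
        simp only [mem_filter, mem_Ico, mem_singleton]
        constructor
        · rintro ⟨⟨ha, hb⟩, hc⟩
          have hm : m = k * M ∨ m = k * M + 1 := by omega
          rcases hm with rfl | rfl
          · rw [h1] at hc; omega
          · rw [h2] at hc; omega
        · rintro rfl
          refine ⟨⟨by omega, by omega⟩, ?_⟩
          rw [Nat.mul_add_mod, Nat.mod_eq_of_lt hr]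
      rw [this, card_singleton, if_pos hr2]
    · have : (Ico (k * M) (k * M + 2)).filter (fun m => m % k = r) = ∅ := by
        ext m
        simp only [mem_filter, mem_Ico, Finset.notMem_empty, iff_false, not_and]
        rintro ⟨ha, hb⟩
        have hm : m = k * M ∨ m = k * M + 1 := by omega
        rcases hm with rfl | rfl
        · rw [h1]; omega
        · rw [h2]; omega
      rw [this, card_empty, if_neg hr2]
  have hdisj : Disjoint ((range (k * M)).filter (fun m => m % k = r))
      ((Ico (k * M) (k * M + 2)).filter (fun m => m % k = r)) := by
    rw [Finset.disjoint_left]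
    intro m hm hm'
    simp only [mem_filter, mem_range, mem_Ico] at hm hm'
    omega
  rw [hsplit, filter_union, card_union_of_disjoint hdisj, pf_count_block k r M hr, hIco]

/-- For `2 ≤ k`, the set of `μ < k` with `(2μ) % k < 2` is `{0, (k+1)/2}`. -/
private lemma pf_two_solutions (k : ℕ) (hk : 2 ≤ k) :
    ((range k).filter (fun μ => (2 * μ) % k < 2)).card = 2 := by
  have hfe : (range k).filter (fun μ => (2 * μ) % k < 2) = {0, (k + 1) / 2} := by
    ext μ
    simp only [mem_filter, mem_range, mem_insert, mem_singleton]
    constructor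
    · rintro ⟨h1, h2⟩
      rw [pf_mod_of_lt_two_mul (by omega)] at h2
      split_ifs at h2 <;> omega
    · rintro (rfl | rfl)
      · constructor
        · omega
        · simp
      · have hlt : (k + 1) / 2 < k := by omega
        refine ⟨hlt, ?_⟩
        rw [pf_mod_of_lt_two_mul (by omega)]
        split_ifs <;> omega
  rw [hfe]
  rw [card_insert_of_notMem (by simp; omega), card_singleton]

theorem topological_order (k M : ℕ) (hk : 1 ≤ k) (hM : 1 ≤ M) (hModd : Odd M) :
    2 * Nat.card {t : ℕ × ℕ × ℕ //
        t.1 < k * M + 2 ∧ t.2.1 ≤ t.2.2 ∧ t.2.2 ≤ k - 1 ∧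
          (t.2.1 + t.2.2) % k = t.1 % k} =
      (k + 1) * (k * M + 2) := by
  classical
  set N := k * M + 2 with hN
  set F : Finset (ℕ × ℕ × ℕ) :=
    ((range N) ×ˢ (range k ×ˢ range k)).filter
      (fun t => t.2.1 ≤ t.2.2 ∧ (t.2.1 + t.2.2) % k = t.1 % k) with hF
  have hcard : Nat.card {t : ℕ × ℕ × ℕ //
      t.1 < k * M + 2 ∧ t.2.1 ≤ t.2.2 ∧ t.2.2 ≤ k - 1 ∧
        (t.2.1 + t.2.2) % k = t.1 % k} = F.card := by
    have hset : {t : ℕ × ℕ × ℕ |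
        t.1 < k * M + 2 ∧ t.2.1 ≤ t.2.2 ∧ t.2.2 ≤ k - 1 ∧
          (t.2.1 + t.2.2) % k = t.1 % k} = ↑F := by
      ext ⟨m, μ, ρ⟩
      simp only [hF, Set.mem_setOf_eq, coe_filter, mem_product, mem_range, Set.mem_setOf_eq]
      constructor
      · rintro ⟨h1, h2, h3, h4⟩
        exact ⟨⟨h1, by omega, by omega⟩, h2, h4⟩
      · rintro ⟨⟨h1, h2, h3⟩, h4, h5⟩
        exact ⟨h1, h4, by omega, h5⟩
    rw [← Set.ncard_coe_finset F, ← hset]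
    exact Nat.card_coe_set_eq _
  rw [hcard]
  have hfib : F.card = ∑ m ∈ range N, ((range k ×ˢ range k).filter
      (fun p => p.1 ≤ p.2 ∧ (p.1 + p.2) % k = m % k)).card := by
    rw [card_eq_sum_card_fiberwise (f := fun t => t.1) (t := range N)
      (fun t ht => by simp only [mem_coe, hF, mem_filter, mem_product] at ht; exact ht.1.1)]
    refine sum_congr rfl fun m hm => ?_
    apply card_nbij' (i := fun t => t.2) (j := fun p => (m, p))
    · rintro ⟨m', μ, ρ⟩ ht
      simp only [mem_coe, hF, mem_filter, mem_product, mem_range] at ht ⊢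
      obtain ⟨⟨⟨_, hμ, hρ⟩, h4, h5⟩, rfl⟩ := ht
      exact ⟨⟨hμ, hρ⟩, h4, h5⟩
    · rintro ⟨μ, ρ⟩ hp
      simp only [mem_coe, mem_filter, mem_product, mem_range] at hp
      simp only [mem_coe, hF, mem_filter, mem_product, mem_range]
      exact ⟨⟨⟨by simpa using hm, hp.1.1, hp.1.2⟩, hp.2.1, hp.2.2⟩, trivial⟩
    · rintro ⟨m', μ, ρ⟩ ht
      simp only [mem_coe, hF, mem_filter] at ht
      simp [ht.2]
    · rintro ⟨μ, ρ⟩ hp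
      rfl
  -- the diagonal sum
  have hdiagsum : ∑ m ∈ range N, ((range k).filter (fun μ => (2 * μ) % k = m % k)).card = N := by
    set G : Finset (ℕ × ℕ) :=
      ((range N) ×ˢ (range k)).filter (fun q => (2 * q.2) % k = q.1 % k) with hG
    have hG1 : G.card = ∑ m ∈ range N,
        ((range k).filter (fun μ => (2 * μ) % k = m % k)).card := by
      rw [card_eq_sum_card_fiberwise (f := fun q => q.1) (t := range N)
        (fun q hq => by simp only [mem_coe, hG, mem_filter, mem_product] at hq; exact hq.1.1)]
      refine sum_congr rfl fun m hm => ?_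
      apply card_nbij' (i := fun q => q.2) (j := fun μ => (m, μ))
      · rintro ⟨m', μ⟩ hq
        simp only [mem_coe, hG, mem_filter, mem_product, mem_range] at hq ⊢
        obtain ⟨⟨⟨_, hμ⟩, h2⟩, rfl⟩ := hq
        exact ⟨hμ, h2⟩
      · intro μ hμ
        simp only [mem_coe, mem_filter, mem_range] at hμ
        simp only [mem_coe, hG, mem_filter, mem_product, mem_range]
        exact ⟨⟨⟨by simpa using hm, hμ.1⟩, hμ.2⟩, trivial⟩
      · rintro ⟨m', μ⟩ hq
        simp only [mem_coe, hG, mem_filter] at hq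
        simp [hq.2]
      · intro μ hμ; rfl
    have hG2 : G.card = ∑ μ ∈ range k,
        ((range N).filter (fun m => m % k = (2 * μ) % k)).card := by
      rw [card_eq_sum_card_fiberwise (f := fun q => q.2) (t := range k)
        (fun q hq => by simp only [mem_coe, hG, mem_filter, mem_product] at hq; exact hq.1.2)]
      refine sum_congr rfl fun μ hμ => ?_
      apply card_nbij' (i := fun q => q.1) (j := fun m => (m, μ))
      · rintro ⟨m, μ'⟩ hq
        simp only [mem_coe, hG, mem_filter, mem_product, mem_range] at hq ⊢
        obtain ⟨⟨⟨hm, _⟩, h2⟩, rfl⟩ := hq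
        exact ⟨hm, h2.symm⟩
      · intro m hm
        simp only [mem_coe, mem_filter, mem_range] at hm
        simp only [mem_coe, hG, mem_filter, mem_product, mem_range]
        exact ⟨⟨⟨hm.1, by simpa using hμ⟩, hm.2.symm⟩, trivial⟩
      · rintro ⟨m, μ'⟩ hq
        simp only [mem_coe, hG, mem_filter] at hq
        simp [hq.2]
      · intro m hm; rfl
    rw [← hG1, hG2]
    rcases eq_or_lt_of_le hk with hk1 | hk2
    · -- k = 1
      have hk1' : k = 1 := hk1.symm
      subst hk1'
      simp [Nat.mod_one]
    · -- k ≥ 2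
      have hk2' : 2 ≤ k := hk2
      have : ∀ μ ∈ range k, ((range N).filter (fun m => m % k = (2 * μ) % k)).card
          = M + if (2 * μ) % k < 2 then 1 else 0 := by
        intro μ hμ
        exact pf_count_mod k ((2 * μ) % k) M hk2' (Nat.mod_lt _ (by omega))
      rw [sum_congr rfl this, sum_add_distrib, sum_const, card_range, smul_eq_mul, mul_comm]
      have hb : ∑ μ ∈ range k, (if (2 * μ) % k < 2 then 1 else 0)
          = ((range k).filter (fun μ => (2 * μ) % k < 2)).card := by
        rw [Finset.card_filter]
      rw [hb, pf_two_solutions k hk2', mul_comm M k]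
  calc 2 * F.card
      = ∑ m ∈ range N, 2 * ((range k ×ˢ range k).filter
          (fun p => p.1 ≤ p.2 ∧ (p.1 + p.2) % k = m % k)).card := by
        rw [hfib, mul_sum]
    _ = ∑ m ∈ range N, (k + ((range k).filter (fun μ => (2 * μ) % k = m % k)).card) := by
        refine sum_congr rfl fun m _ => ?_
        exact pf_key k (m % k) (by omega) (Nat.mod_lt _ (by omega))
    _ = N * k + N := by
        rw [sum_add_distrib, sum_const, card_range, smul_eq_mul, hdiagsum]
    _ = (k + 1) * N := by ring
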